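/- Let b > 0 and ℓ ≥ 1 a natural number, and on a probability space let X_1, …, X_ℓ be independent real random variables such that X_k has the exponential distribution of rate k·b (density k·b·e^{−k·b·s} on [0,∞)). Then for every θ > 0 and every T ≥ 0: ℙ( Σ_{k=1}^ℓ X_k ≤ T ) ≤ exp( θT − Σ_{k=1}^ℓ θ/(k·b + θ) ). -/

import Mathlib

open MeasureTheory ProbabilityTheory

lemma exp_lintegral_aux {r θ : ℝ} (hr : 0 < r) (hθ : 0 < θ) :
    ∫⁻ x, exponentialPDF r x * ENNReal.ofReal (Real.exp (-θ * x)) =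
      ENNReal.ofReal (r / (r + θ)) := by
  have hrθ : 0 < r + θ := by linarith
  have key : ∀ x : ℝ, exponentialPDF r x * ENNReal.ofReal (Real.exp (-θ * x)) =
      ENNReal.ofReal (r / (r + θ)) * exponentialPDF (r + θ) x := by
    intro x
    rcases lt_or_ge x 0 with hx | hx
    · rw [exponentialPDF_of_neg hx, exponentialPDF_of_neg hx, zero_mul, mul_zero]
    · rw [exponentialPDF_of_nonneg hx, exponentialPDF_of_nonneg hx,
        ← ENNReal.ofReal_mul (by positivity), ← ENNReal.ofReal_mul (by positivity)]
      congr 1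
      have he : Real.exp (-(r * x)) * Real.exp (-θ * x) = Real.exp (-((r + θ) * x)) := by
        rw [← Real.exp_add]; ring_nf
      rw [mul_assoc, he, ← mul_assoc, div_mul_cancel₀ _ hrθ.ne']
  simp_rw [key]
  rw [lintegral_const_mul' _ _ ENNReal.ofReal_ne_top,
    lintegral_exponentialPDF_eq_one hrθ, mul_one]

lemma mgf_exponential_aux {Ω : Type*} [MeasureSpace Ω] [IsProbabilityMeasure (ℙ : Measure Ω)]
    {X : Ω → ℝ} (hX : Measurable X) {r θ : ℝ} (hr : 0 < r) (hθ : 0 < θ)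
    (hdist : Measure.map X ℙ = volume.withDensity (exponentialPDF r)) :
    mgf X ℙ (-θ) = r / (r + θ) := by
  have hmeas : Measurable fun x : ℝ => ENNReal.ofReal (Real.exp (-θ * x)) :=
    ((measurable_const.mul measurable_id).exp).ennreal_ofReal
  have h1 : mgf X ℙ (-θ) = (∫⁻ ω, ENNReal.ofReal (Real.exp (-θ * X ω)) ∂ℙ).toReal := by
    rw [mgf, integral_eq_lintegral_of_nonneg_ae
      (Filter.Eventually.of_forall fun ω => (Real.exp_pos _).le)
      ((hX.const_mul (-θ)).exp).aestronglyMeasurable]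
  rw [h1, ← lintegral_map hmeas hX, hdist,
    lintegral_withDensity_eq_lintegral_mul _
      (show Measurable (exponentialPDF r) from
        (measurable_exponentialPDFReal r).ennreal_ofReal) hmeas]
  simp only [Pi.mul_apply]
  rw [exp_lintegral_aux hr hθ, ENNReal.toReal_ofReal (by positivity)]

/-- Chernoff-type bound (inequality (5) in the proof of Proposition 2.3): if
`X_1, …, X_ℓ` are independent, `X_k` exponentially distributed with rate `k·b`, then
`ℙ(∑ X_k ≤ T) ≤ exp(θT − ∑_{k=1}^ℓ θ/(kb+θ))` for every `θ > 0` and `T ≥ 0`.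
Here `X k` (for `k : Fin ℓ`) plays the role of `X_{k+1}`, with rate `(k+1)·b`, and the
exponential distribution of rate `μ` is the measure with density `μ e^{−μs} 1_{s≥0}`. -/
theorem stmt_7 {Ω : Type*} [MeasureSpace Ω] [IsProbabilityMeasure (ℙ : Measure Ω)]
    (b : ℝ) (hb : 0 < b) (ℓ : ℕ) (hℓ : 1 ≤ ℓ)
    (X : Fin ℓ → Ω → ℝ) (hmeas : ∀ k, Measurable (X k))
    (hindep : iIndepFun X ℙ)
    (hdist : ∀ k : Fin ℓ,
      Measure.map (X k) ℙ = volume.withDensity (exponentialPDF (((k : ℕ) + 1) * b)))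
    (θ T : ℝ) (hθ : 0 < θ) (hT : 0 ≤ T) :
    ℙ {ω | ∑ k : Fin ℓ, X k ω ≤ T} ≤
      ENNReal.ofReal (Real.exp (θ * T - ∑ k : Fin ℓ, θ / (((k : ℕ) + 1) * b + θ))) := by
  set S : Ω → ℝ := ∑ k : Fin ℓ, X k with hS
  have hSapp : ∀ ω, S ω = ∑ k : Fin ℓ, X k ω := fun ω => by
    simp [hS, Finset.sum_apply]
  have hSmeas : Measurable S := by
    have h := Finset.measurable_sum (f := X) Finset.univ fun k _ => hmeas k
    exact (funext hSapp : S = fun ω => ∑ k : Fin ℓ, X k ω) ▸ h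
  have hrk : ∀ k : Fin ℓ, (0:ℝ) < ((k : ℕ) + 1) * b := fun k => by positivity
  -- each X k is a.e. nonneg
  have hXnn : ∀ k : Fin ℓ, ∀ᵐ ω ∂(ℙ : Measure Ω), 0 ≤ X k ω := by
    intro k
    have : (ℙ : Measure Ω) {ω | X k ω < 0} = 0 := by
      have : (ℙ : Measure Ω) {ω | X k ω < 0} = Measure.map (X k) ℙ (Set.Iio 0) := by
        rw [Measure.map_apply (hmeas k) measurableSet_Iio]; rfl
      rw [this, hdist k, withDensity_apply _ measurableSet_Iio,
        lintegral_exponentialPDF_of_nonpos le_rfl]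
    rw [ae_iff]
    simpa only [not_le] using this
  have hSnn : ∀ᵐ ω ∂(ℙ : Measure Ω), 0 ≤ S ω := by
    have := (ae_all_iff.mpr hXnn)
    filter_upwards [this] with ω hω
    rw [hSapp]
    exact Finset.sum_nonneg fun k _ => hω k
  -- integrability of exp(-θ S)
  have h_int : Integrable (fun ω => Real.exp (-θ * S ω)) ℙ := by
    refine Integrable.mono' (integrable_const 1)
      ((hSmeas.const_mul (-θ)).exp).aestronglyMeasurable ?_
    filter_upwards [hSnn] with ω hω
    rw [Real.norm_eq_abs, abs_of_pos (Real.exp_pos _)]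
    exact Real.exp_le_one_iff.mpr (by nlinarith)
  -- Chernoff
  have hcher := measure_le_le_exp_mul_mgf (μ := ℙ) (X := S) T (neg_nonpos.mpr hθ.le) h_int
  have hmgf : mgf S ℙ (-θ) = ∏ k : Fin ℓ, (((k : ℕ) + 1) * b) / (((k : ℕ) + 1) * b + θ) := by
    rw [hS, hindep.mgf_sum hmeas]
    exact Finset.prod_congr rfl fun k _ =>
      mgf_exponential_aux (hmeas k) (hrk k) hθ (hdist k)
  have hprod : ∏ k : Fin ℓ, (((k : ℕ) + 1) * b) / (((k : ℕ) + 1) * b + θ) ≤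
      Real.exp (-∑ k : Fin ℓ, θ / (((k : ℕ) + 1) * b + θ)) := by
    rw [← Finset.sum_neg_distrib, Real.exp_sum]
    refine Finset.prod_le_prod (fun k _ => by positivity) fun k _ => ?_
    have h := Real.add_one_le_exp (-(θ / (((k : ℕ) + 1) * b + θ)))
    have hpos : (0:ℝ) < ((k : ℕ) + 1) * b + θ := by have := hrk k; linarith
    have : (((k : ℕ) + 1) * b) / (((k : ℕ) + 1) * b + θ) =
        -(θ / (((k : ℕ) + 1) * b + θ)) + 1 := by
      field_simp
      ring
    linarith [h, this.ge]
  have hfinal : (ℙ {ω | ∑ k : Fin ℓ, X k ω ≤ T}).toReal ≤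
      Real.exp (θ * T - ∑ k : Fin ℓ, θ / (((k : ℕ) + 1) * b + θ)) := by
    have hset : {ω | ∑ k : Fin ℓ, X k ω ≤ T} = {ω | S ω ≤ T} := by
      ext ω; simp [hSapp]
    rw [hset]
    calc (ℙ {ω | S ω ≤ T}).toReal ≤ Real.exp (-(-θ) * T) * mgf S ℙ (-θ) := hcher
      _ ≤ Real.exp (θ * T) * Real.exp (-∑ k : Fin ℓ, θ / (((k : ℕ) + 1) * b + θ)) := by
          rw [neg_neg, hmgf]
          exact mul_le_mul_of_nonneg_left hprod (Real.exp_pos _).le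
      _ = Real.exp (θ * T - ∑ k : Fin ℓ, θ / (((k : ℕ) + 1) * b + θ)) := by
          rw [← Real.exp_add, ← sub_eq_add_neg]
  exact (ENNReal.le_ofReal_iff_toReal_le (measure_ne_top _ _) (Real.exp_pos _).le).mpr hfinal
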